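/- Let $h > 1$ and let $V_\infty: \mathbb{R} \to \mathbb{R}$ be a bounded nonnegative $C^2$ solution of $V_\infty'' + V_\infty(1 - h - V_\infty) = 0$ on $\mathbb{R}$. Then $V_\infty \equiv 0$. -/

import Mathlib

open Real

theorem stmt15 (h : ℝ) (hh : 1 < h) (V : ℝ → ℝ)
    (hsmooth : ContDiff ℝ 2 V)
    (hbdd : ∃ M : ℝ, ∀ x : ℝ, |V x| ≤ M)
    (hnonneg : ∀ x : ℝ, 0 ≤ V x)
    (hODE : ∀ x : ℝ, deriv (deriv V) x + V x * (1 - h - V x) = 0) :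
    ∀ x : ℝ, V x = 0 := by
  obtain ⟨M, hM⟩ := hbdd
  have hVle : ∀ x, V x ≤ M := fun x => (abs_le.mp (hM x)).2
  have hMpos : 0 ≤ M := le_trans (hnonneg 0) (hVle 0)
  have hV1 : Differentiable ℝ V := hsmooth.differentiable (by norm_num)
  have hW : ContDiff ℝ 1 (deriv V) := by
    have := (contDiff_succ_iff_deriv (n := 1)).mp (by exact_mod_cast hsmooth)
    exact this.2.2
  have hW1 : Differentiable ℝ (deriv V) := hW.differentiable one_ne_zero
  have hW'nonneg : ∀ x, 0 ≤ deriv (deriv V) x := by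
    intro x
    have := hODE x
    nlinarith [hnonneg x]
  have hmono : Monotone (deriv V) :=
    monotone_of_deriv_nonneg hW1 hW'nonneg
  have hWzero : ∀ x, deriv V x = 0 := by
    intro a
    rcases lt_trichotomy (deriv V a) 0 with hlt | heq | hgt
    · exfalso
      set s := deriv V a with hs
      set x := a + 2 * M / s - 1 with hx
      have hxa : x < a := by
        have h1 : 2 * M / s ≤ 0 := div_nonpos_of_nonneg_of_nonpos (by linarith) hlt.le
        simp only [hx]; linarith
      obtain ⟨c, hc, hceq⟩ := exists_hasDerivAt_eq_slope V (deriv V) hxa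
        hV1.continuous.continuousOn (fun y _ => (hV1 y).hasDerivAt)
      have hceq' : deriv V c * (a - x) = V a - V x := by
        rw [hceq, div_mul_cancel₀ _ (sub_ne_zero.mpr hxa.ne')]
      have hcle : deriv V c ≤ s := hmono hc.2.le
      have hx' : s * (a - x) = s - 2 * M := by
        have hs0 : s ≠ 0 := ne_of_lt hlt
        have e : s * (2 * M / s) = 2 * M := by field_simp
        rw [hx]; linear_combination -e
      have h1 : V x ≥ V a - s * (a - x) := by
        nlinarith [hc.1, hc.2]
      have := hVle x
      have := hnonneg a
      nlinarith
    · exact heq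
    · exfalso
      set s := deriv V a with hs
      set x := a + 2 * M / s + 1 with hx
      have hxa : a < x := by
        have h1 : 0 ≤ 2 * M / s := div_nonneg (by linarith) hgt.le
        simp only [hx]; linarith
      obtain ⟨c, hc, hceq⟩ := exists_hasDerivAt_eq_slope V (deriv V) hxa
        hV1.continuous.continuousOn (fun y _ => (hV1 y).hasDerivAt)
      have hceq' : deriv V c * (x - a) = V x - V a := by
        rw [hceq, div_mul_cancel₀ _ (sub_ne_zero.mpr hxa.ne')]
      have hcge : s ≤ deriv V c := hmono hc.1.le
      have hx' : s * (x - a) = 2 * M + s := by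
        have hs0 : s ≠ 0 := ne_of_gt hgt
        have e : s * (2 * M / s) = 2 * M := by field_simp
        rw [hx]; linear_combination e
      have h1 : V x ≥ V a + s * (x - a) := by
        nlinarith [hc.1, hc.2]
      have := hVle x
      have := hnonneg a
      nlinarith
  intro x
  have hd0 : deriv V = fun _ => (0 : ℝ) := funext hWzero
  have h2 : deriv (deriv V) x = 0 := by rw [hd0]; simp
  have := hODE x
  rw [h2] at this
  nlinarith [hnonneg x]
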